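/- Let $\nu$ be a finite measure on $\mathbb{R}^2$ absolutely continuous with respect to Lebesgue measure, and let $K \subseteq \mathbb{R}^2$ be measurable. Then for every $0 < u < \nu(K)$, $\nu\big(\{(r,t) \in K : \nu(K \cap (\mathbb{R} \times (t, \infty))) \le u\}\big) = u$. -/

import Mathlib

open MeasureTheory ENNReal

/-- for a finite measure `ν` on `ℝ²` absolutely continuous with respect to
Lebesgue measure, a measurable `K` and `0 < u < ν(K)`,
`ν({(r,t) ∈ K : ν(K ∩ (ℝ × (t,∞))) ≤ u}) = u`. -/
theorem stmt8 (ν : Measure (ℝ × ℝ)) [IsFiniteMeasure ν] (hac : ν ≪ volume)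
    (K : Set (ℝ × ℝ)) (hK : MeasurableSet K) (u : ℝ≥0∞) (hu0 : 0 < u) (hu : u < ν K) :
    ν {p : ℝ × ℝ | p ∈ K ∧ ν (K ∩ {q : ℝ × ℝ | p.2 < q.2}) ≤ u} = u := by
  set f : ℝ → ℝ≥0∞ := fun t => ν (K ∩ {q : ℝ × ℝ | t < q.2}) with hf
  have hmeas : ∀ t : ℝ, MeasurableSet (K ∩ {q : ℝ × ℝ | t < q.2}) := fun t =>
    hK.inter (measurable_snd measurableSet_Ioi)
  have hmono : ∀ {s t : ℝ}, s ≤ t → f t ≤ f s := fun {s t} hst =>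
    measure_mono (Set.inter_subset_inter_right _ (fun q hq => lt_of_le_of_lt hst hq))
  have hline : ∀ t : ℝ, ν {q : ℝ × ℝ | q.2 = t} = 0 := by
    intro t
    refine hac ?_
    have h1 : {q : ℝ × ℝ | q.2 = t} = (Set.univ : Set ℝ) ×ˢ ({t} : Set ℝ) := by
      ext ⟨a, b⟩; simp [Set.mem_prod, eq_comm]
    rw [h1, Measure.volume_eq_prod, Measure.prod_prod]
    simp
  set S : Set ℝ := {t : ℝ | f t ≤ u} with hS
  have hSup : ∀ {s t : ℝ}, s ∈ S → s ≤ t → t ∈ S := fun {s t} hs hst =>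
    le_trans (hmono hst) hs
  -- S nonempty
  have hSne : S.Nonempty := by
    set A : ℕ → Set (ℝ × ℝ) := fun n => K ∩ {q : ℝ × ℝ | (n : ℝ) < q.2} with hA
    have hAanti : Antitone A := by
      intro m n hmn
      refine Set.inter_subset_inter_right _ (fun q hq => ?_)
      simp only [Set.mem_setOf_eq] at hq ⊢
      have : (m : ℝ) ≤ (n : ℝ) := by exact_mod_cast hmn
      linarith
    have hInter : ⋂ n : ℕ, A n = ∅ := by
      ext p
      simp only [hA, Set.mem_iInter, Set.mem_inter_iff, Set.mem_setOf_eq,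
        Set.mem_empty_iff_false, iff_false, not_forall]
      obtain ⟨n, hn⟩ := exists_nat_gt p.2
      exact ⟨n, fun h => absurd h.2 (not_lt.2 hn.le)⟩
    have hiInf : (⨅ n : ℕ, ν (A n)) = 0 := by
      have := Directed.measure_iInter (μ := ν)
        (fun n : ℕ => (hmeas n).nullMeasurableSet)
        hAanti.directed_ge ⟨0, measure_ne_top ν _⟩
      rw [hInter] at this
      simpa using this.symm
    have hex : ∃ n : ℕ, ν (A n) < u := by
      rw [← hiInf] at hu0
      exact iInf_lt_iff.1 hu0
    obtain ⟨n, hn⟩ := hex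
    exact ⟨n, hn.le⟩
  -- S bounded below
  have hSbdd : BddBelow S := by
    by_contra hb
    have hall : ∀ n : ℕ, f (-(n : ℝ)) ≤ u := by
      intro n
      obtain ⟨t, ht, htn⟩ := not_bddBelow_iff.1 hb (-(n : ℝ))
      exact hSup ht htn.le
    set A : ℕ → Set (ℝ × ℝ) := fun n => K ∩ {q : ℝ × ℝ | (-(n : ℝ)) < q.2} with hA
    have hAmono : Monotone A := by
      intro m n hmn
      refine Set.inter_subset_inter_right _ (fun q hq => ?_)
      simp only [Set.mem_setOf_eq] at hq ⊢
      have : (m : ℝ) ≤ (n : ℝ) := by exact_mod_cast hmn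
      linarith
    have hUnion : ⋃ n : ℕ, A n = K := by
      ext p
      simp only [hA, Set.mem_iUnion, Set.mem_inter_iff, Set.mem_setOf_eq]
      constructor
      · rintro ⟨n, hp, _⟩; exact hp
      · intro hp
        obtain ⟨n, hn⟩ := exists_nat_gt (-p.2)
        exact ⟨n, hp, by linarith⟩
    have h1 := Directed.measure_iUnion (μ := ν) hAmono.directed_le
    rw [hUnion] at h1
    have h2 : ν K ≤ u := by rw [h1]; exact iSup_le hall
    exact absurd hu (not_lt.2 h2)
  set t₀ : ℝ := sInf S with ht₀
  have hgtS : ∀ {t : ℝ}, t₀ < t → t ∈ S := by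
    intro t ht
    obtain ⟨s, hs, hst⟩ := Real.lt_sInf_add_pos hSne (sub_pos.2 ht)
    exact hSup hs (by linarith)
  -- t₀ ∈ S
  have ht₀S : t₀ ∈ S := by
    set A : ℕ → Set (ℝ × ℝ) := fun n => K ∩ {q : ℝ × ℝ | t₀ + 1/((n:ℝ)+1) < q.2} with hA
    have hAmono : Monotone A := by
      intro m n hmn
      refine Set.inter_subset_inter_right _ (fun q hq => ?_)
      simp only [Set.mem_setOf_eq] at hq ⊢
      have h2 : 1/((n:ℝ)+1) ≤ 1/((m:ℝ)+1) := by
        apply one_div_le_one_div_of_le (by positivity)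
        have : (m : ℝ) ≤ (n : ℝ) := by exact_mod_cast hmn
        linarith
      linarith
    have hUnion : ⋃ n : ℕ, A n = K ∩ {q : ℝ × ℝ | t₀ < q.2} := by
      ext p
      simp only [hA, Set.mem_iUnion, Set.mem_inter_iff, Set.mem_setOf_eq]
      constructor
      · rintro ⟨n, hp, h⟩
        have h1 : (0:ℝ) < 1/((n:ℝ)+1) := by positivity
        exact ⟨hp, by linarith⟩
      · rintro ⟨hp, h⟩
        obtain ⟨n, hn⟩ := exists_nat_one_div_lt (sub_pos.2 h)
        exact ⟨n, hp, by linarith⟩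
    have h1 := Directed.measure_iUnion (μ := ν) hAmono.directed_le
    rw [hUnion] at h1
    show ν (K ∩ {q : ℝ × ℝ | t₀ < q.2}) ≤ u
    rw [h1]
    refine iSup_le fun n => ?_
    have h3 : (0:ℝ) < 1/((n:ℝ)+1) := by positivity
    exact hgtS (by linarith)
  -- ν (K ∩ {p.2 ≥ t₀}) ≥ u
  have hge : u ≤ ν (K ∩ {q : ℝ × ℝ | t₀ ≤ q.2}) := by
    set A : ℕ → Set (ℝ × ℝ) := fun n => K ∩ {q : ℝ × ℝ | t₀ - 1/((n:ℝ)+1) < q.2} with hA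
    have hAanti : Antitone A := by
      intro m n hmn
      refine Set.inter_subset_inter_right _ (fun q hq => ?_)
      simp only [Set.mem_setOf_eq] at hq ⊢
      have h2 : 1/((n:ℝ)+1) ≤ 1/((m:ℝ)+1) := by
        apply one_div_le_one_div_of_le (by positivity)
        have : (m : ℝ) ≤ (n : ℝ) := by exact_mod_cast hmn
        linarith
      linarith
    have hInter : ⋂ n : ℕ, A n = K ∩ {q : ℝ × ℝ | t₀ ≤ q.2} := by
      ext p
      simp only [hA, Set.mem_iInter, Set.mem_inter_iff, Set.mem_setOf_eq]
      constructor
      · intro h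
        refine ⟨(h 0).1, ?_⟩
        by_contra hlt
        push_neg at hlt
        obtain ⟨n, hn⟩ := exists_nat_one_div_lt (sub_pos.2 hlt)
        have := (h n).2
        linarith
      · rintro ⟨hp, h⟩ n
        have h1 : (0:ℝ) < 1/((n:ℝ)+1) := by positivity
        exact ⟨hp, by linarith⟩
    have h1 := Directed.measure_iInter (μ := ν)
      (fun n : ℕ => (hmeas _).nullMeasurableSet)
      hAanti.directed_ge ⟨0, measure_ne_top ν _⟩
    rw [hInter] at h1
    rw [h1]
    refine le_iInf fun n => ?_
    have h3 : (0:ℝ) < 1/((n:ℝ)+1) := by positivity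
    have hlt : t₀ - 1/((n:ℝ)+1) < t₀ := by linarith
    have hnotS : t₀ - 1/((n:ℝ)+1) ∉ S := fun h => absurd (csInf_le hSbdd h) (not_le.2 hlt)
    exact le_of_lt (not_le.1 hnotS)
  -- ν (K ∩ {p.2 ≥ t₀}) = f t₀
  have hsplit : ν (K ∩ {q : ℝ × ℝ | t₀ ≤ q.2}) = f t₀ := by
    apply le_antisymm
    · have hsub : K ∩ {q : ℝ × ℝ | t₀ ≤ q.2}
          ⊆ (K ∩ {q : ℝ × ℝ | t₀ < q.2}) ∪ {q : ℝ × ℝ | q.2 = t₀} := by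
        rintro p ⟨hp, hp2⟩
        have hp2' : t₀ ≤ p.2 := hp2
        rcases lt_or_eq_of_le hp2' with h | h
        · exact Or.inl ⟨hp, h⟩
        · exact Or.inr h.symm
      calc ν (K ∩ {q : ℝ × ℝ | t₀ ≤ q.2})
          ≤ ν (K ∩ {q : ℝ × ℝ | t₀ < q.2}) + ν {q : ℝ × ℝ | q.2 = t₀} :=
            le_trans (measure_mono hsub) (measure_union_le _ _)
        _ = f t₀ := by rw [hline]; simp; rfl
    · exact measure_mono (Set.inter_subset_inter_right _
        (fun q hq => (le_of_lt (hq : t₀ < q.2) : t₀ ≤ q.2)))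
  have hft₀ : f t₀ = u := le_antisymm ht₀S (hge.trans hsplit.le)
  have htarget : {p : ℝ × ℝ | p ∈ K ∧ ν (K ∩ {q : ℝ × ℝ | p.2 < q.2}) ≤ u}
      = K ∩ {q : ℝ × ℝ | t₀ ≤ q.2} := by
    ext p
    simp only [Set.mem_setOf_eq, Set.mem_inter_iff]
    constructor
    · rintro ⟨hp, hpu⟩
      exact ⟨hp, csInf_le hSbdd hpu⟩
    · rintro ⟨hp, hp2⟩
      exact ⟨hp, le_trans (hmono hp2) ht₀S⟩
  rw [htarget, hsplit, hft₀]
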